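/- Let $R_k = [0,2^{-k+1}]\times[0,2^{-j_k}]$ and $C_N \subset [0,1]$ as in the crystallization construction. Then for each $k \in \{1,\ldots,N\}$, $\frac{1}{m_2(R_k)} \int_{R_k} \chi_{E_N} = 2^{-N}$, where $E_N = [0,2^{-N+1}] \times C_N$. -/

import Mathlib

open MeasureTheory
open scoped ENNReal

/-- The Rademacher function `r₀ = χ_{[0,1/2]} - χ_{(1/2,1)}`, extended 1-periodically. -/
noncomputable def r0 (t : ℝ) : ℝ := if Int.fract t ≤ 1/2 then 1 else -1

lemma r0_eq_one_iff {x : ℝ} : r0 x = 1 ↔ Int.fract x ≤ 1/2 := by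
  unfold r0
  by_cases h : Int.fract x ≤ 1/2
  · rw [if_pos h]; exact iff_of_true rfl h
  · rw [if_neg h]
    constructor
    · intro habs; norm_num at habs
    · intro hh; exact absurd hh h

lemma volIccIco (S : Set ℝ) (b : ℝ) :
    volume (S ∩ Set.Icc 0 b) = volume (S ∩ Set.Ico 0 b) := by
  have h1 : S ∩ Set.Icc 0 b ⊆ (S ∩ Set.Ico 0 b) ∪ {b} := by
    intro t ⟨ht, h0, htb⟩
    rcases lt_or_eq_of_le htb with h | h
    · exact Or.inl ⟨ht, h0, h⟩
    · exact Or.inr h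
  refine le_antisymm ((measure_mono h1).trans ?_)
    (measure_mono (Set.inter_subset_inter_right _ Set.Ico_subset_Icc_self))
  calc volume ((S ∩ Set.Ico 0 b) ∪ {b}) ≤ volume (S ∩ Set.Ico 0 b) + volume {b} :=
        measure_union_le _ _
    _ = volume (S ∩ Set.Ico 0 b) := by simp

lemma per_iter (S : Set ℝ) (p : ℝ) (hper : ∀ t, t + p ∈ S ↔ t ∈ S) :
    ∀ (n : ℕ) (t : ℝ), t + n * p ∈ S ↔ t ∈ S := by
  intro n
  induction n with
  | zero => simp
  | succ n ih =>
    intro t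
    have h : t + ((n : ℕ)+1 : ℕ) * p = (t + n * p) + p := by push_cast; ring
    rw [h, hper, ih]

lemma vol_per (S : Set ℝ) (hS : MeasurableSet S) (p : ℝ) (hp : 0 < p)
    (hper : ∀ t, t + p ∈ S ↔ t ∈ S) (n : ℕ) :
    volume (S ∩ Set.Ico 0 (n * p)) = n * volume (S ∩ Set.Ico 0 p) := by
  induction n with
  | zero => simp
  | succ n ih =>
    have hnp : (0:ℝ) ≤ n * p := by positivity
    have hsplit : Set.Ico (0:ℝ) (((n:ℕ)+1 : ℕ) * p) =
        Set.Ico 0 ((n:ℝ) * p) ∪ Set.Ico ((n:ℝ)*p) (((n:ℕ)+1 : ℕ)*p) :=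
      (Set.Ico_union_Ico_eq_Ico hnp (by push_cast; nlinarith)).symm
    have key : ∀ t : ℝ, t + (-((n:ℝ)*p)) ∈ S ↔ t ∈ S := by
      intro t
      have h2 := per_iter S p hper n (t + (-((n:ℝ)*p)))
      simpa using h2.symm
    have hshift : S ∩ Set.Ico ((n:ℝ)*p) (((n:ℕ)+1:ℕ)*p)
        = (fun t => t + (-((n:ℝ)*p))) ⁻¹' (S ∩ Set.Ico 0 p) := by
      ext t
      simp only [Set.mem_inter_iff, Set.mem_preimage, Set.mem_Ico, key t]
      push_cast
      constructor
      · rintro ⟨hSt, h1, h2⟩; exact ⟨hSt, by linarith, by linarith⟩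
      · rintro ⟨hSt, h1, h2⟩; exact ⟨hSt, by linarith, by linarith⟩
    have hdisj : Disjoint (S ∩ Set.Ico 0 ((n:ℝ)*p)) (S ∩ Set.Ico ((n:ℝ)*p) (((n:ℕ)+1:ℕ)*p)) :=
      Set.Ico_disjoint_Ico_same.mono Set.inter_subset_right Set.inter_subset_right
    rw [hsplit, Set.inter_union_distrib_left,
      measure_union hdisj (hS.inter measurableSet_Ico), ih, hshift,
      measure_preimage_add_right, Nat.cast_succ, add_mul, one_mul]

lemma ofReal_two_zpow (z : ℤ) : ENNReal.ofReal ((2:ℝ)^z) = (2:ℝ≥0∞)^z := by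
  cases z with
  | ofNat n => simp [ENNReal.ofReal_pow]
  | negSucc n =>
      rw [zpow_negSucc, zpow_negSucc, ENNReal.ofReal_inv_of_pos (by positivity),
        ENNReal.ofReal_pow (by norm_num)]
      norm_num

/-- The set of points satisfying the first `l` Rademacher conditions. -/
def Gset (j : ℕ → ℕ) (l : ℕ) : Set ℝ :=
  {t : ℝ | ∀ m, 1 ≤ m → m ≤ l → Int.fract ((2:ℝ)^(j m) * t) ≤ 1/2}

lemma measG (j : ℕ → ℕ) (l : ℕ) : MeasurableSet (Gset j l) := by
  have h : Gset j l = ⋂ (m : ℕ), ⋂ (_ : 1 ≤ m) (_ : m ≤ l),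
      (fun t : ℝ => Int.fract ((2:ℝ)^(j m) * t)) ⁻¹' Set.Iic (1/2) := by
    ext t; simp [Gset]
  rw [h]
  refine MeasurableSet.iInter fun m => MeasurableSet.iInter fun _ =>
    MeasurableSet.iInter fun _ => ?_
  exact ((measurable_const_mul ((2:ℝ)^(j m))).fract) measurableSet_Iic

lemma two_pow_mul_zpow (a : ℕ) (b : ℤ) : (2:ℝ)^(a:ℕ) * (2:ℝ)^(b:ℤ) = (2:ℝ)^((a:ℤ) + b) := by
  rw [← zpow_natCast (2:ℝ) a, ← zpow_add₀ (two_ne_zero)]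

lemma two_zpow_cancel (b : ℕ) : (2:ℝ)^((b:ℤ) + (-(b:ℤ) - 1)) = 1/2 := by
  have h : ((b:ℤ) + (-(b:ℤ) - 1)) = -1 := by ring
  rw [h, zpow_neg_one]; norm_num

lemma key (N k : ℕ) (j : ℕ → ℕ)
    (hmono : ∀ a b, 1 ≤ a → a ≤ b → b ≤ N → j b + (b - a) ≤ j a) (hk : k ≤ N) :
    ∀ l, 1 ≤ l → l ≤ k →
      volume (Gset j l ∩ Set.Ico 0 ((2:ℝ)^(-(j l : ℤ))))
        = (2:ℝ≥0∞) ^ (-(j l : ℤ) - l) := by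
  intro l
  induction l with
  | zero => omega
  | succ l ih =>
    intro _ hlk
    rcases Nat.eq_zero_or_pos l with rfl | hl1
    · -- base case l+1 = 1
      have hset : Gset j 1 ∩ Set.Ico 0 ((2:ℝ)^(-(j 1 : ℤ)))
          = Set.Icc 0 ((2:ℝ)^(-(j 1 : ℤ) - 1)) := by
        ext t
        simp only [Gset, Set.mem_inter_iff, Set.mem_setOf_eq, Set.mem_Ico, Set.mem_Icc]
        constructor
        · rintro ⟨hG, h0, hlt⟩
          refine ⟨h0, ?_⟩
          have hc := hG 1 le_rfl le_rfl
          have hx0 : 0 ≤ (2:ℝ)^(j 1) * t := by positivity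
          have hx1 : (2:ℝ)^(j 1) * t < 1 := by
            have := mul_lt_mul_of_pos_left hlt (show (0:ℝ) < 2^(j 1) by positivity)
            rwa [two_pow_mul_zpow, add_neg_cancel, zpow_zero] at this
          rw [Int.fract_eq_self.mpr ⟨hx0, hx1⟩] at hc
          have h2 : (2:ℝ)^(j 1) * ((2:ℝ)^(-(j 1:ℤ) - 1)) = 1/2 := by
            rw [two_pow_mul_zpow]
            exact two_zpow_cancel _
          nlinarith [show (0:ℝ) < 2^(j 1) by positivity]
        · rintro ⟨h0, hle⟩
          have hlt : t < (2:ℝ)^(-(j 1 : ℤ)) := by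
            refine lt_of_le_of_lt hle ?_
            exact zpow_lt_zpow_right₀ one_lt_two (by omega)
          refine ⟨?_, h0, hlt⟩
          intro m hm1 hm2
          have hm : m = 1 := le_antisymm hm2 hm1
          subst hm
          have hx0 : 0 ≤ (2:ℝ)^(j 1) * t := by positivity
          have hx1 : (2:ℝ)^(j 1) * t ≤ 1/2 := by
            have := mul_le_mul_of_nonneg_left hle (show (0:ℝ) ≤ 2^(j 1) by positivity)
            rw [two_pow_mul_zpow] at this
            calc (2:ℝ)^(j 1) * t ≤ (2:ℝ)^((j 1 : ℤ) + (-(j 1:ℤ) - 1)) := this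
              _ = 1/2 := two_zpow_cancel _
          rw [Int.fract_eq_self.mpr ⟨hx0, by linarith⟩]
          exact hx1
      rw [hset, ← Set.univ_inter (Set.Icc _ _), volIccIco, Set.univ_inter,
        Real.volume_Ico]
      rw [sub_zero, ofReal_two_zpow]
      norm_num
    · -- inductive step: l ≥ 1
      have hab : j (l+1) + 1 ≤ j l := by
        have := hmono l (l+1) hl1 (by omega) (by omega)
        omega
      set a := j l with ha
      set b := j (l+1) with hb
      have hset : Gset j (l+1) ∩ Set.Ico 0 ((2:ℝ)^(-(b : ℤ)))
          = Gset j l ∩ Set.Icc 0 ((2:ℝ)^(-(b : ℤ) - 1)) := by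
        ext t
        simp only [Gset, Set.mem_inter_iff, Set.mem_setOf_eq, Set.mem_Ico, Set.mem_Icc]
        constructor
        · rintro ⟨hG, h0, hlt⟩
          refine ⟨fun m h1 h2 => hG m h1 (by omega), h0, ?_⟩
          have hc := hG (l+1) (by omega) le_rfl
          rw [← hb] at hc
          have hx0 : 0 ≤ (2:ℝ)^b * t := by positivity
          have hx1 : (2:ℝ)^b * t < 1 := by
            have := mul_lt_mul_of_pos_left hlt (show (0:ℝ) < 2^b by positivity)
            rwa [two_pow_mul_zpow, add_neg_cancel, zpow_zero] at this
          rw [Int.fract_eq_self.mpr ⟨hx0, hx1⟩] at hc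
          have h2 : (2:ℝ)^b * ((2:ℝ)^(-(b:ℤ) - 1)) = 1/2 := by
            rw [two_pow_mul_zpow]; exact two_zpow_cancel _
          nlinarith [show (0:ℝ) < 2^b by positivity]
        · rintro ⟨hG, h0, hle⟩
          have hlt : t < (2:ℝ)^(-(b : ℤ)) :=
            lt_of_le_of_lt hle (zpow_lt_zpow_right₀ one_lt_two (by omega))
          refine ⟨?_, h0, hlt⟩
          intro m hm1 hm2
          rcases Nat.lt_or_ge m (l+1) with h | h
          · exact hG m hm1 (by omega)
          · have hm : m = l + 1 := by omega
            subst hm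
            rw [← hb]
            have hx0 : 0 ≤ (2:ℝ)^b * t := by positivity
            have hx1 : (2:ℝ)^b * t ≤ 1/2 := by
              have := mul_le_mul_of_nonneg_left hle (show (0:ℝ) ≤ 2^b by positivity)
              rw [two_pow_mul_zpow] at this
              calc (2:ℝ)^b * t ≤ (2:ℝ)^((b : ℤ) + (-(b:ℤ) - 1)) := this
                _ = 1/2 := two_zpow_cancel _
            rw [Int.fract_eq_self.mpr ⟨hx0, by linarith⟩]
            exact hx1
      set p := (2:ℝ)^(-(a : ℤ)) with hp
      have hppos : 0 < p := by positivity
      set M := 2^(a - b - 1) with hM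
      have hMp : (2:ℝ)^(-(b:ℤ) - 1) = (M : ℝ) * p := by
        rw [hM, hp]
        push_cast
        rw [← zpow_natCast (2:ℝ) (a - b - 1), ← zpow_add₀ (two_ne_zero)]
        congr 1
        have : ((a - b - 1 : ℕ) : ℤ) = (a : ℤ) - b - 1 := by omega
        omega
      have hper : ∀ t, t + p ∈ Gset j l ↔ t ∈ Gset j l := by
        have heq : ∀ m, 1 ≤ m → m ≤ l → ∀ t : ℝ,
            Int.fract ((2:ℝ)^(j m) * (t + p)) = Int.fract ((2:ℝ)^(j m) * t) := by
          intro m hm1 hm2 t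
          have hma : a ≤ j m := by
            have := hmono m l hm1 hm2 (by omega)
            omega
          have hpint : (2:ℝ)^(j m) * p = ((2^(j m - a) : ℕ) : ℝ) := by
            rw [hp]
            push_cast
            rw [two_pow_mul_zpow, ← zpow_natCast (2:ℝ) (j m - a)]
            congr 1
            omega
          rw [mul_add, hpint, Int.fract_add_natCast]
        intro t
        constructor
        · intro h m h1 h2
          have := h m h1 h2
          rwa [heq m h1 h2 t] at this
        · intro h m h1 h2
          rw [heq m h1 h2 t]
          exact h m h1 h2
      have ihv := ih (by omega) (by omega)
      rw [hset, volIccIco, hMp, vol_per (Gset j l) (measG j l) p hppos hper M, ihv]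
      rw [hM]
      push_cast
      rw [← zpow_natCast (2:ℝ≥0∞) (a - b - 1),
        ← ENNReal.zpow_add (two_ne_zero) (ENNReal.ofNat_ne_top)]
      congr 1
      omega

/-- With `C_N = {t ∈ [0,1] : r₀(2^{j_m} t) = 1, m = 1,…,N}`, `E_N = [0,2^{-N+1}] × C_N`,
and `R_k = [0,2^{-k+1}] × [0,2^{-j_k}]`, under the sparseness condition
`j_{k-1} > N + j_k`, the average of `χ_{E_N}` over `R_k` equals `2^{-N}` for each
`1 ≤ k ≤ N`. -/
theorem stmt13 (N : ℕ) (hN : 1 ≤ N) (j : ℕ → ℕ)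
    (hsp : ∀ m, 2 ≤ m → m ≤ N → N + j m < j (m - 1))
    (k : ℕ) (hk1 : 1 ≤ k) (hkN : k ≤ N) :
    (∫⁻ p in Set.Icc (0:ℝ) ((2:ℝ) ^ (1 - (k:ℤ))) ×ˢ Set.Icc (0:ℝ) ((2:ℝ) ^ (-(j k:ℤ))),
        Set.indicator
          (Set.Icc (0:ℝ) ((2:ℝ) ^ (1 - (N:ℤ))) ×ˢ
            {t ∈ Set.Icc (0:ℝ) 1 | ∀ m, 1 ≤ m → m ≤ N → r0 ((2:ℝ) ^ (j m) * t) = 1})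
          (1 : (ℝ × ℝ) → ℝ≥0∞) p) /
      volume (Set.Icc (0:ℝ) ((2:ℝ) ^ (1 - (k:ℤ))) ×ˢ Set.Icc (0:ℝ) ((2:ℝ) ^ (-(j k:ℤ))))
      = (2:ℝ≥0∞) ^ (-(N:ℤ)) := by
  have hmono : ∀ a, 1 ≤ a → ∀ b, a ≤ b → b ≤ N → j b + (b - a) ≤ j a := by
    intro a ha b
    induction b with
    | zero => intro h1 h2; omega
    | succ b ih =>
      intro hab hbN
      rcases Nat.lt_or_ge a (b+1) with h | h
      · have h2 := hsp (b+1) (by omega) hbN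
        simp only [Nat.add_sub_cancel] at h2
        have hb := ih (by omega) (by omega)
        omega
      · have haeq : a = b+1 := by omega
        subst haeq
        omega
  have hmono' : ∀ a b, 1 ≤ a → a ≤ b → b ≤ N → j b + (b - a) ≤ j a :=
    fun a b ha hab hbN => hmono a ha b hab hbN
  have hCeq : {t ∈ Set.Icc (0:ℝ) 1 | ∀ m, 1 ≤ m → m ≤ N → r0 ((2:ℝ) ^ (j m) * t) = 1}
      = Set.Icc (0:ℝ) 1 ∩ Gset j N := by
    ext t
    simp only [Set.mem_sep_iff, Set.mem_inter_iff, Gset, Set.mem_setOf_eq, r0_eq_one_iff]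
  have hCmeas : MeasurableSet
      {t ∈ Set.Icc (0:ℝ) 1 | ∀ m, 1 ≤ m → m ≤ N → r0 ((2:ℝ) ^ (j m) * t) = 1} := by
    rw [hCeq]; exact measurableSet_Icc.inter (measG j N)
  have hE : MeasurableSet (Set.Icc (0:ℝ) ((2:ℝ) ^ (1 - (N:ℤ))) ×ˢ
      {t ∈ Set.Icc (0:ℝ) 1 | ∀ m, 1 ≤ m → m ≤ N → r0 ((2:ℝ) ^ (j m) * t) = 1}) :=
    measurableSet_Icc.prod hCmeas
  rw [lintegral_indicator_one hE, Measure.restrict_apply hE, Set.prod_inter_prod,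
    Measure.volume_eq_prod, Measure.prod_prod, Measure.prod_prod]
  have hx : Set.Icc (0:ℝ) ((2:ℝ)^(1-(N:ℤ))) ∩ Set.Icc 0 ((2:ℝ)^(1-(k:ℤ)))
      = Set.Icc 0 ((2:ℝ)^(1-(N:ℤ))) := by
    rw [Set.Icc_inter_Icc, min_eq_left (zpow_le_zpow_right₀ one_le_two (by omega : (1:ℤ) - N ≤ 1 - k))]
    norm_num
  have h2one : (2:ℝ)^(-(j k:ℤ)) ≤ 1 := by
    have := zpow_le_zpow_right₀ (one_le_two (α := ℝ)) (show -(j k:ℤ) ≤ 0 by omega)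
    simpa using this
  have hy : {t ∈ Set.Icc (0:ℝ) 1 | ∀ m, 1 ≤ m → m ≤ N → r0 ((2:ℝ) ^ (j m) * t) = 1}
      ∩ Set.Icc 0 ((2:ℝ)^(-(j k:ℤ)))
      = Gset j k ∩ Set.Icc 0 ((2:ℝ)^(-(j k:ℤ))) := by
    rw [hCeq]
    ext t
    simp only [Set.mem_inter_iff, Set.mem_Icc, Gset, Set.mem_setOf_eq]
    constructor
    · rintro ⟨⟨h01, hGN⟩, hI⟩
      exact ⟨fun m h1 h2 => hGN m h1 (le_trans h2 hkN), hI⟩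
    · rintro ⟨hGk, h0, hle⟩
      refine ⟨⟨⟨h0, hle.trans h2one⟩, ?_⟩, h0, hle⟩
      intro m h1 h2
      rcases Nat.lt_or_ge k m with h | h
      · have hjm : j m + 1 ≤ j k := by
          have := hmono' k m hk1 (by omega) h2
          omega
        have hx0 : 0 ≤ (2:ℝ)^(j m) * t := by positivity
        have hx1 : (2:ℝ)^(j m) * t ≤ 1/2 := by
          have hh := mul_le_mul_of_nonneg_left hle (show (0:ℝ) ≤ 2^(j m) by positivity)
          rw [two_pow_mul_zpow] at hh
          refine hh.trans ?_
          calc (2:ℝ)^((j m:ℤ) + -(j k:ℤ)) ≤ (2:ℝ)^(-1:ℤ) :=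
                zpow_le_zpow_right₀ one_le_two (by omega)
            _ = 1/2 := by norm_num
        rw [Int.fract_eq_self.mpr ⟨hx0, by linarith⟩]
        exact hx1
      · exact hGk m h1 h
  rw [hx, hy, volIccIco, key N k j hmono' hkN k hk1 le_rfl,
    Real.volume_Icc, Real.volume_Icc, Real.volume_Icc, sub_zero, sub_zero, sub_zero,
    ofReal_two_zpow, ofReal_two_zpow, ofReal_two_zpow,
    ← ENNReal.zpow_add two_ne_zero ENNReal.ofNat_ne_top,
    ← ENNReal.zpow_add two_ne_zero ENNReal.ofNat_ne_top]
  have hexp : (-(N:ℤ)) = (1 - N + (-(j k:ℤ) - k)) - (1 - k + -(j k:ℤ)) := by ring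
  rw [hexp, ENNReal.zpow_sub two_ne_zero ENNReal.ofNat_ne_top, div_eq_mul_inv]
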